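/- arXiv:1202.5531 — 2 statements merged into one kernel-verified Lean document; each statement's English description precedes it below -/
import Mathlib

section
/- Let ℓ ∈ ℕ, let A : Fin ℓ × box(N) → ℂ be a multi-matrix, let b₁, b₂ : box(2N) → ℂ, and let B₁, B₂ be the corresponding catalectic multi-matrices, B_s(i,j) = b_s(i+j). Then A B₁ Aᵗ = A B₂ Aᵗ if and only if Σ_{β ∈ box(2N)} b₁(β) z(β) = Σ_{β ∈ box(2N)} b₂(β) z(β) for every z in the ℂ-linear span of { u ⋆ v : u, v in the row space of A }; that is, A B Aᵗ depends only on, and determines, the restriction of the linear functional defined by b to the subspace μ(im Aᵗ · im Aᵗ). -/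
/-- `Box N` is the set of multi-indices `i ∈ ℕ₀^r` with `i_k ≤ N_k` for all `k`. -/
def Box {r : ℕ} (N : Fin r → ℕ) : Type := ∀ k, Fin (N k + 1)

instance {r : ℕ} (N : Fin r → ℕ) : Fintype (Box N) := by unfold Box; infer_instance
instance {r : ℕ} (N : Fin r → ℕ) : DecidableEq (Box N) := by unfold Box; infer_instance

/-- Addition `box(N) × box(N) → box(2N)` of multi-indices. -/
def boxAdd {r : ℕ} {N : Fin r → ℕ} (i j : Box N) : Box (fun k => 2 * N k) :=
  fun k => ⟨(i k : ℕ) + (j k : ℕ), by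
    have h1 := (i k).isLt
    have h2 := (j k).isLt
    show (i k : ℕ) + (j k : ℕ) < 2 * N k + 1
    omega⟩

/-- The convolution (polynomial multiplication) of two multi-vectors
`f, g : box(N) → ℂ`: `(f ⋆ g)(β) = ∑_{α + α' = β} f(α) g(α')`. -/
noncomputable def conv {r : ℕ} {N : Fin r → ℕ} (f g : Box N → ℂ) :
    Box (fun k => 2 * N k) → ℂ :=
  fun β => ∑ α : Box N, ∑ α' : Box N, if boxAdd α α' = β then f α * g α' else 0

lemma key_aux {r : ℕ} {N : Fin r → ℕ} (b : Box (fun k => 2 * N k) → ℂ) (u v : Box N → ℂ) :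
    ∑ β : Box (fun k => 2 * N k), b β * conv u v β
      = ∑ i : Box N, ∑ j : Box N, u i * b (boxAdd i j) * v j := by
  unfold conv
  simp only [Finset.mul_sum, mul_ite, mul_zero]
  rw [Finset.sum_comm]
  refine Finset.sum_congr rfl fun i _ => ?_
  rw [Finset.sum_comm]
  refine Finset.sum_congr rfl fun j _ => ?_
  simp [Finset.sum_ite_eq]
  ring


/-- For catalectic multi-matrices `B₁, B₂` given by
`b₁, b₂ : box(2N) → ℂ`, one has `A B₁ Aᵗ = A B₂ Aᵗ` if and only if the linear
functionals defined by `b₁` and `b₂` agree on the ℂ-linear span of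
`{u ⋆ v : u, v ∈ row space of A}`; i.e. `A B Aᵗ` depends only on, and determines,
the restriction of the functional `b` to `μ(im Aᵗ · im Aᵗ)`. -/
theorem ABAt_eq_iff_functionals_agree {r : ℕ} (N : Fin r → ℕ) (ℓ : ℕ)
    (A : Fin ℓ × Box N → ℂ) (b₁ b₂ : Box (fun k => 2 * N k) → ℂ) :
    (∀ k l : Fin ℓ,
        ∑ i : Box N, ∑ j : Box N, A (k, i) * b₁ (boxAdd i j) * A (l, j) =
        ∑ i : Box N, ∑ j : Box N, A (k, i) * b₂ (boxAdd i j) * A (l, j)) ↔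
      (∀ z ∈ Submodule.span ℂ
          {h : Box (fun k => 2 * N k) → ℂ |
            ∃ u ∈ Submodule.span ℂ (Set.range fun k : Fin ℓ => fun i : Box N => A (k, i)),
            ∃ v ∈ Submodule.span ℂ (Set.range fun k : Fin ℓ => fun i : Box N => A (k, i)),
              h = conv u v},
        ∑ β : Box (fun k => 2 * N k), b₁ β * z β =
        ∑ β : Box (fun k => 2 * N k), b₂ β * z β) := by
  set R := Submodule.span ℂ (Set.range fun k : Fin ℓ => fun i : Box N => A (k, i)) with hR
  -- bilinear difference form
  set D : (Box N → ℂ) → (Box N → ℂ) → ℂ := fun u v =>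
    ∑ i : Box N, ∑ j : Box N, u i * (b₁ (boxAdd i j) - b₂ (boxAdd i j)) * v j with hD
  have Dadd_left : ∀ u u' v, D (u + u') v = D u v + D u' v := by
    intro u u' v
    simp only [hD, Pi.add_apply, add_mul, Finset.sum_add_distrib]
  have Dsmul_left : ∀ (c : ℂ) u v, D (c • u) v = c * D u v := by
    intro c u v
    simp only [hD, Pi.smul_apply, smul_eq_mul, Finset.mul_sum]
    exact Finset.sum_congr rfl fun i _ => Finset.sum_congr rfl fun j _ => by ring
  have Dadd_right : ∀ u v v', D u (v + v') = D u v + D u v' := by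
    intro u v v'
    simp only [hD, Pi.add_apply, mul_add, Finset.sum_add_distrib]
  have Dsmul_right : ∀ (c : ℂ) u v, D u (c • v) = c * D u v := by
    intro c u v
    simp only [hD, Pi.smul_apply, smul_eq_mul, Finset.mul_sum]
    exact Finset.sum_congr rfl fun i _ => Finset.sum_congr rfl fun j _ => by ring
  constructor
  · intro hA z hz
    rw [← sub_eq_zero, ← Finset.sum_sub_distrib]
    simp only [← sub_mul]
    -- goal : ∑ β, (b₁ β - b₂ β) * z β = 0
    have hgen : ∀ u ∈ R, ∀ v ∈ R, D u v = 0 := by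
      intro u hu v hv
      induction hu using Submodule.span_induction with
      | mem x hx =>
        obtain ⟨k, rfl⟩ := hx
        induction hv using Submodule.span_induction with
        | mem y hy =>
          obtain ⟨l, rfl⟩ := hy
          simp only [hD, mul_sub, sub_mul, Finset.sum_sub_distrib]
          rw [hA k l, sub_self]
        | zero => simp only [hD, Pi.zero_apply, mul_zero, zero_mul, Finset.sum_const_zero]
        | add y y' _ _ h1 h2 => rw [Dadd_right, h1, h2, add_zero]
        | smul c y _ h1 => rw [Dsmul_right, h1, mul_zero]
      | zero => simp only [hD, Pi.zero_apply, mul_zero, zero_mul, Finset.sum_const_zero]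
      | add x x' _ _ h1 h2 => rw [Dadd_left, h1, h2, add_zero]
      | smul c x _ h1 => rw [Dsmul_left, h1, mul_zero]
    induction hz using Submodule.span_induction with
    | mem x hx =>
      obtain ⟨u, hu, v, hv, rfl⟩ := hx
      have := key_aux (fun β => b₁ β - b₂ β) u v
      rw [this]
      exact hgen u hu v hv
    | zero => simp
    | add x y _ _ h1 h2 => simp only [Pi.add_apply, mul_add, Finset.sum_add_distrib, h1, h2, add_zero]
    | smul c x _ h1 =>
      simp only [Pi.smul_apply, smul_eq_mul]
      rw [show ∀ f : Box (fun k => 2 * N k) → ℂ,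
        (∑ β, (b₁ β - b₂ β) * (c * f β)) = c * ∑ β, (b₁ β - b₂ β) * f β from
        fun f => by rw [Finset.mul_sum]; exact Finset.sum_congr rfl fun β _ => by ring, h1, mul_zero]
  · intro hz k l
    have hk : (fun i : Box N => A (k, i)) ∈ R := Submodule.subset_span ⟨k, rfl⟩
    have hl : (fun i : Box N => A (l, i)) ∈ R := Submodule.subset_span ⟨l, rfl⟩
    have hmem : conv (fun i : Box N => A (k, i)) (fun i : Box N => A (l, i)) ∈
        Submodule.span ℂ
          {h : Box (fun k => 2 * N k) → ℂ |
            ∃ u ∈ R, ∃ v ∈ R, h = conv u v} :=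
      Submodule.subset_span ⟨_, hk, _, hl, rfl⟩
    have := hz _ hmem
    rw [key_aux b₁, key_aux b₂] at this
    exact this
end

section
/- Let ℓ ∈ ℕ, let A : Fin ℓ × box(N) → ℂ be a multi-matrix whose row space U is nonzero, let b : box(2N) → ℂ, and let B be the catalectic multi-matrix with B(i,j) = b(i+j). Then the ℓ × ℓ matrix A B Aᵗ has rank at most 1 if and only if there exists a linear subspace W ⊆ U of codimension 1 in U such that Σ_{β ∈ box(2N)} b(β) (w ⋆ u)(β) = 0 for all w ∈ W and all u ∈ U. -/
/-- The catalecticant bilinear form associated to `b`. -/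
noncomputable def catBil {r : ℕ} {N : Fin r → ℕ} (b : Box (fun k => 2 * N k) → ℂ) :
    (Box N → ℂ) →ₗ[ℂ] (Box N → ℂ) →ₗ[ℂ] ℂ :=
  LinearMap.mk₂ ℂ (fun f g => ∑ i : Box N, ∑ j : Box N, f i * b (boxAdd i j) * g j)
    (fun m₁ m₂ n => by
      rw [← Finset.sum_add_distrib]
      refine Finset.sum_congr rfl fun i _ => ?_
      rw [← Finset.sum_add_distrib]
      exact Finset.sum_congr rfl fun j _ => by simp; ring)
    (fun c m n => by
      simp only [smul_eq_mul, Pi.smul_apply, Finset.mul_sum]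
      exact Finset.sum_congr rfl fun i _ => Finset.sum_congr rfl fun j _ => by ring)
    (fun m n₁ n₂ => by
      rw [← Finset.sum_add_distrib]
      refine Finset.sum_congr rfl fun i _ => ?_
      rw [← Finset.sum_add_distrib]
      exact Finset.sum_congr rfl fun j _ => by simp; ring)
    (fun c m n => by
      simp only [smul_eq_mul, Pi.smul_apply, Finset.mul_sum]
      exact Finset.sum_congr rfl fun i _ => Finset.sum_congr rfl fun j _ => by ring)

lemma catBil_apply {r : ℕ} {N : Fin r → ℕ} (b : Box (fun k => 2 * N k) → ℂ)
    (f g : Box N → ℂ) :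
    catBil b f g = ∑ i : Box N, ∑ j : Box N, f i * b (boxAdd i j) * g j := rfl

lemma boxAdd_comm {r : ℕ} {N : Fin r → ℕ} (i j : Box N) : boxAdd i j = boxAdd j i := by
  funext k
  simp [boxAdd, Nat.add_comm]

lemma catBil_symm {r : ℕ} {N : Fin r → ℕ} (b : Box (fun k => 2 * N k) → ℂ)
    (f g : Box N → ℂ) : catBil b f g = catBil b g f := by
  rw [catBil_apply, catBil_apply, Finset.sum_comm]
  refine Finset.sum_congr rfl fun j _ => Finset.sum_congr rfl fun i _ => ?_
  rw [boxAdd_comm]; ring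

lemma sum_b_conv {r : ℕ} {N : Fin r → ℕ} (b : Box (fun k => 2 * N k) → ℂ)
    (w u : Box N → ℂ) :
    ∑ β : Box (fun k => 2 * N k), b β * conv w u β = catBil b w u := by
  rw [catBil_apply]
  unfold conv
  simp only [Finset.mul_sum, mul_ite, mul_zero]
  rw [Finset.sum_comm]
  refine Finset.sum_congr rfl fun i _ => ?_
  rw [Finset.sum_comm]
  refine Finset.sum_congr rfl fun j _ => ?_
  rw [Finset.sum_ite_eq]
  simp only [Finset.mem_univ, if_true]
  ring

set_option synthInstance.maxHeartbeats 1000000 in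
set_option maxHeartbeats 1000000 in
/-- Let `A : Fin ℓ × box(N) → ℂ` have nonzero row space `U`,
and let `B(i,j) = b(i+j)` be catalectic. Then the `ℓ × ℓ` matrix `A B Aᵗ` has
rank at most 1 iff there is a codimension-one subspace `W ⊆ U` such that
`∑_β b(β) (w ⋆ u)(β) = 0` for all `w ∈ W` and `u ∈ U`. -/
theorem rank_ABAt_le_one_iff {r : ℕ} (N : Fin r → ℕ) (ℓ : ℕ)
    (A : Fin ℓ × Box N → ℂ) (b : Box (fun k => 2 * N k) → ℂ)
    (U : Submodule ℂ (Box N → ℂ))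
    (hU : U = Submodule.span ℂ (Set.range fun k : Fin ℓ => fun i : Box N => A (k, i)))
    (hU0 : U ≠ ⊥) :
    (Matrix.of fun k l : Fin ℓ =>
        ∑ i : Box N, ∑ j : Box N, A (k, i) * b (boxAdd i j) * A (l, j)).rank ≤ 1 ↔
      ∃ W : Submodule ℂ (Box N → ℂ), W ≤ U ∧
        Module.finrank ℂ W + 1 = Module.finrank ℂ U ∧
        ∀ w ∈ W, ∀ u ∈ U,
          ∑ β : Box (fun k => 2 * N k), b β * conv w u β = 0 := by
  classical
  set V := (Box N → ℂ)
  set aRow : Fin ℓ → V := fun k => fun i : Box N => A (k, i) with haRow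
  have haU : ∀ k, aRow k ∈ U := fun k => by
    rw [hU]; exact Submodule.subset_span ⟨k, rfl⟩
  set aU : Fin ℓ → U := fun k => ⟨aRow k, haU k⟩ with haUdef
  have hspan : Submodule.span ℂ (Set.range aU) = ⊤ := by
    apply Submodule.map_injective_of_injective U.injective_subtype
    rw [Submodule.map_span, Submodule.map_top, Submodule.range_subtype]
    have : U.subtype '' Set.range aU = Set.range aRow := by
      ext x; constructor
      · rintro ⟨y, ⟨k, rfl⟩, rfl⟩; exact ⟨k, rfl⟩
      · rintro ⟨k, rfl⟩; exact ⟨aU k, ⟨k, rfl⟩, rfl⟩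
    rw [this, ← hU]
  set Φ := catBil b with hΦ
  set ψ : U →ₗ[ℂ] (U →ₗ[ℂ] ℂ) := (Φ.comp U.subtype).compl₂ U.subtype with hψ
  have hψapp : ∀ (u u' : U), ψ u u' = Φ (u : V) (u' : V) := fun u u' => rfl
  set E : (U →ₗ[ℂ] ℂ) →ₗ[ℂ] (Fin ℓ → ℂ) :=
    LinearMap.pi (fun l => LinearMap.applyₗ (aU l)) with hE
  have hEinj : Function.Injective E := by
    rw [← LinearMap.ker_eq_bot]
    rw [Submodule.eq_bot_iff]
    intro f hf
    have hf' : ∀ l, f (aU l) = 0 := fun l => congrFun hf l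
    exact LinearMap.ext_on_range hspan (fun i => by simpa using hf' i)
  -- the key rank identity
  have hrank : (Matrix.of fun k l : Fin ℓ =>
      ∑ i : Box N, ∑ j : Box N, A (k, i) * b (boxAdd i j) * A (l, j)).rank
      = Module.finrank ℂ (LinearMap.range ψ) := by
    rw [Matrix.rank_eq_finrank_span_row]
    have hrow : (Set.range (Matrix.of fun k l : Fin ℓ =>
        ∑ i : Box N, ∑ j : Box N, A (k, i) * b (boxAdd i j) * A (l, j)).row)
        = Set.range (⇑E ∘ ⇑ψ ∘ aU) := by
      congr 1
    rw [hrow]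
    have hsp : Submodule.span ℂ (Set.range (⇑E ∘ ⇑ψ ∘ aU))
        = Submodule.map E (LinearMap.range ψ) := by
      rw [Set.range_comp, Set.range_comp ⇑ψ, Submodule.span_image, Submodule.span_image,
        hspan, Submodule.map_top]
    rw [hsp]
    have hEfr : Module.finrank ℂ (Submodule.map E (LinearMap.range ψ))
        = Module.finrank ℂ (LinearMap.range ψ) :=
      ((Submodule.equivMapOfInjective E hEinj (LinearMap.range ψ)).finrank_eq).symm
    exact hEfr
  have hrn : Module.finrank ℂ (LinearMap.range ψ) + Module.finrank ℂ (LinearMap.ker ψ)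
      = Module.finrank ℂ U := LinearMap.finrank_range_add_finrank_ker ψ
  rw [hrank]
  constructor
  · intro h
    have hU1 : 0 < Module.finrank ℂ U := by
      rcases Nat.eq_zero_or_pos (Module.finrank ℂ U) with h0 | h0
      · exact absurd (Submodule.finrank_eq_zero.mp h0) hU0
      · exact h0
    rcases Nat.lt_or_ge (Module.finrank ℂ (LinearMap.range ψ)) 1 with h1 | h1
    · -- range ψ = ⊥ : take any hyperplane of U
      have hψ0 : ∀ u u' : U, ψ u u' = 0 := by
        have : LinearMap.range ψ = ⊥ :=
          Submodule.finrank_eq_zero.mp (Nat.lt_one_iff.mp h1)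
        intro u u'
        have : ψ u = 0 := by
          have hm : ψ u ∈ LinearMap.range ψ := ⟨u, rfl⟩
          rw [this] at hm
          simpa using hm
        rw [this]; rfl
      obtain ⟨n, hn⟩ : ∃ n, Module.finrank ℂ U = n + 1 :=
        ⟨Module.finrank ℂ U - 1, by omega⟩
      set bU := Module.finBasis ℂ U with hbU
      set i0 : Fin (Module.finrank ℂ U) := ⟨0, hU1⟩ with hi0
      set f : U →ₗ[ℂ] ℂ := bU.coord i0 with hf
      have hfsurj : Function.Surjective f := by
        intro c
        refine ⟨c • bU i0, ?_⟩
        simp [hf, Module.Basis.coord_apply]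
      have hfr : Module.finrank ℂ (LinearMap.range f) = 1 := by
        rw [LinearMap.range_eq_top.mpr hfsurj, finrank_top, Module.finrank_self]
      have hfk := LinearMap.finrank_range_add_finrank_ker f
      refine ⟨Submodule.map U.subtype (LinearMap.ker f), Submodule.map_subtype_le _ _, ?_, ?_⟩
      · rw [Submodule.finrank_map_subtype_eq]
        omega
      · intro w hw u hu
        rw [sum_b_conv]
        obtain ⟨x, _, rfl⟩ := hw
        exact hψ0 x ⟨u, hu⟩
    · -- range ψ has rank exactly 1 : take W = ker ψ (pushed to V)
      have hk1 : Module.finrank ℂ (LinearMap.ker ψ) + 1 = Module.finrank ℂ U := by omega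
      refine ⟨Submodule.map U.subtype (LinearMap.ker ψ), Submodule.map_subtype_le _ _, ?_, ?_⟩
      · rw [Submodule.finrank_map_subtype_eq]
        exact hk1
      · intro w hw u hu
        rw [sum_b_conv]
        obtain ⟨x, hx, rfl⟩ := hw
        have : ψ x = 0 := hx
        have := congrFun (congrArg (⇑) this) ⟨u, hu⟩
        simpa [hψapp] using this
  · rintro ⟨W, hWU, hWrk, hWv⟩
    have hker : Submodule.comap U.subtype W ≤ LinearMap.ker ψ := by
      intro x hx
      have hx' : (x : V) ∈ W := hx
      apply LinearMap.ext (fun u' : U => ?_)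
      rw [hψapp]
      have := hWv (x : V) hx' (u' : V) u'.2
      rw [sum_b_conv] at this
      simpa using this
    have hcomap : Module.finrank ℂ (Submodule.comap U.subtype W)
        = Module.finrank ℂ W := (Submodule.comapSubtypeEquivOfLe hWU).finrank_eq
    have hmono := Submodule.finrank_mono hker
    omega
end
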